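/- Let κ be an infinite cardinal, α an ordinal, let ⟨𝓕_{β,η} : (β,η) ∈ α × κ⟩ be a stratified set of filters on κ, let X ⊆ κ, let C = {(β,η) ∈ α × κ : X ∈ 𝓕_{β,η}}, and let cl(C) = C_{κ^+} be the closure of C. If (β,η) ∈ cl(C), then for every G ∈ 𝓕_{β,η} and every γ with β < γ < α, the set {ζ < κ : (γ,ζ) ∈ cl(C) and G ∈ 𝓕_{γ,ζ}} has cardinality κ. -/

import Mathlib

open Cardinal Set

universe u

/-- A stratified set of filters on `κ` (indexed by pairs `(β, η) ∈ α × κ`): a matrix of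
proper filters such that (i) there is a choice of sets `c β η ∈ F β η` with each row
`⟨c β η : η < κ⟩` pairwise disjoint, and (ii) whenever `β < δ < α`, `η < κ` and
`G ∈ F β η`, the set `{ζ < κ : G ∈ F δ ζ}` has cardinality `κ`. -/
def IsStratified {K : Type u} (α : Ordinal.{u}) (F : Ordinal.{u} → K → Filter K) : Prop :=
  (∀ β < α, ∀ η : K, (F β η).NeBot) ∧
  (∃ c : Ordinal.{u} → K → Set K,
      (∀ β < α, ∀ η : K, c β η ∈ F β η) ∧
      (∀ β < α, ∀ η ζ : K, η ≠ ζ → Disjoint (c β η) (c β ζ))) ∧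
  (∀ β δ : Ordinal.{u}, β < δ → δ < α → ∀ η : K, ∀ G ∈ F β η,
      #{ζ : K | G ∈ F δ ζ} = #K)

/-- The closure iteration: `C₀ = C`; `C_{ξ+1} = C_ξ ∪ {(β,η) : ∃ ε, β < ε < α and
∃ G ∈ F β η with #{ζ < κ : G ∈ F ε ζ and (ε,ζ) ∉ C_ξ} < κ}`; and at limits
`C_λ = ⋃_{ξ<λ} C_ξ`. -/
noncomputable def closIter {K : Type u} (α : Ordinal.{u}) (F : Ordinal.{u} → K → Filter K)
    (C : Set (Ordinal.{u} × K)) : Ordinal.{u} → Set (Ordinal.{u} × K) := fun ξ =>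
  Ordinal.limitRecOn ξ C
    (fun _ Cp => Cp ∪ {p : Ordinal.{u} × K | ∃ ε : Ordinal.{u}, p.1 < ε ∧ ε < α ∧
        ∃ G ∈ F p.1 p.2, #{ζ : K | G ∈ F ε ζ ∧ (ε, ζ) ∉ Cp} < #K})
    (fun o _ ih => ⋃ (ξ' : Ordinal.{u}) (h : ξ' < o), ih ξ' h)

section
variable {K : Type u}

lemma mk_eq_of_superset' {A B : Set K} (h : A ⊆ B) (hA : #A = #K) : #B = #K :=
  le_antisymm (mk_set_le B) (hA ▸ Cardinal.mk_le_mk_of_subset h)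

lemma mk_split' (hK : aleph0 ≤ #K) (p q : K → Prop)
    (hp : #{x | p x} = #K) (hq : #{x | p x ∧ ¬ q x} < #K) :
    #{x | p x ∧ q x} = #K := by
  refine le_antisymm (mk_set_le _) ?_
  by_contra hlt
  push_neg at hlt
  have hsub : {x | p x} ⊆ {x | p x ∧ q x} ∪ {x | p x ∧ ¬ q x} := by
    intro x hx
    by_cases h : q x
    · exact Or.inl ⟨hx, h⟩
    · exact Or.inr ⟨hx, h⟩
  have : #{x | p x} ≤ #{x | p x ∧ q x} + #{x | p x ∧ ¬ q x} :=
    le_trans (Cardinal.mk_le_mk_of_subset hsub) (Cardinal.mk_union_le _ _)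
  rw [hp] at this
  exact absurd this (not_le_of_gt (Cardinal.add_lt_of_lt hK hlt hq))

lemma closIter_zero' (α : Ordinal.{u}) (F : Ordinal.{u} → K → Filter K)
    (C : Set (Ordinal.{u} × K)) : closIter α F C 0 = C :=
  Ordinal.limitRecOn_zero _ _ _

lemma closIter_succ' (α : Ordinal.{u}) (F : Ordinal.{u} → K → Filter K)
    (C : Set (Ordinal.{u} × K)) (ξ : Ordinal.{u}) :
    closIter α F C (Order.succ ξ) = closIter α F C ξ ∪
      {p : Ordinal.{u} × K | ∃ ε : Ordinal.{u}, p.1 < ε ∧ ε < α ∧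
        ∃ G ∈ F p.1 p.2, #{ζ : K | G ∈ F ε ζ ∧ (ε, ζ) ∉ closIter α F C ξ} < #K} :=
  Ordinal.limitRecOn_succ _ _ _ _

lemma closIter_limit' (α : Ordinal.{u}) (F : Ordinal.{u} → K → Filter K)
    (C : Set (Ordinal.{u} × K)) {ξ : Ordinal.{u}} (h : Order.IsSuccLimit ξ) :
    closIter α F C ξ = ⋃ (ξ' : Ordinal.{u}) (_ : ξ' < ξ), closIter α F C ξ' :=
  Ordinal.limitRecOn_limit _ _ _ _ h

lemma closIter_mono' (α : Ordinal.{u}) (F : Ordinal.{u} → K → Filter K)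
    (C : Set (Ordinal.{u} × K)) :
    ∀ ξ' ξ : Ordinal.{u}, ξ ≤ ξ' → closIter α F C ξ ⊆ closIter α F C ξ' := by
  intro ξ'
  induction ξ' using Ordinal.induction with
  | h ξ' IH =>
    intro ξ hle
    rcases eq_or_lt_of_le hle with rfl | hlt
    · exact subset_rfl
    rcases Ordinal.zero_or_succ_or_isSuccLimit ξ' with h0 | ⟨o, rfl⟩ | hlim
    · exact absurd hlt (by simp [h0])
    · have hξo : ξ ≤ o := Order.lt_succ_iff.mp hlt
      rw [closIter_succ']
      exact (IH o (Order.lt_succ o) ξ hξo).trans subset_union_left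
    · rw [closIter_limit' α F C hlim]
      exact subset_iUnion₂_of_subset ξ hlt subset_rfl
end
lemma main_aux {K : Type u} (hK : aleph0 ≤ #K)
    (α : Ordinal.{u}) (F : Ordinal.{u} → K → Filter K) (hF : IsStratified α F)
    (X : Set K) :
    ∀ ξ : Ordinal.{u}, ξ ≤ (Order.succ (#K)).ord →
      ∀ β : Ordinal.{u}, ∀ η : K,
        (β, η) ∈ closIter α F {p : Ordinal.{u} × K | p.1 < α ∧ X ∈ F p.1 p.2} ξ →
      ∀ G ∈ F β η, ∀ γ : Ordinal.{u}, β < γ → γ < α →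
      #{ζ : K | (γ, ζ) ∈ closIter α F
          {p : Ordinal.{u} × K | p.1 < α ∧ X ∈ F p.1 p.2} (Order.succ (#K)).ord ∧
        G ∈ F γ ζ} = #K := by
  set C : Set (Ordinal.{u} × K) := {p : Ordinal.{u} × K | p.1 < α ∧ X ∈ F p.1 p.2} with hC
  intro ξ
  induction ξ using Ordinal.induction with
  | h ξ IH =>
    intro hξΛ β η hmem G hG γ hβγ hγα
    rcases Ordinal.zero_or_succ_or_isSuccLimit ξ with h0 | ⟨o, rfl⟩ | hlim
    · -- base case
      subst h0
      rw [closIter_zero'] at hmem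
      obtain ⟨hβα, hX⟩ := hmem
      have hbig : #{ζ : K | X ∩ G ∈ F γ ζ} = #K :=
        hF.2.2 β γ hβγ hγα η (X ∩ G) (Filter.inter_mem hX hG)
      refine mk_eq_of_superset' ?_ hbig
      intro ζ hζ
      refine ⟨closIter_mono' α F C _ 0 (zero_le (a := _)) ?_, ?_⟩
      · rw [closIter_zero']
        exact ⟨hγα, Filter.mem_of_superset hζ inter_subset_left⟩
      · exact Filter.mem_of_superset hζ inter_subset_right
    · -- successor
      rw [closIter_succ'] at hmem
      rcases hmem with hmem | ⟨ε, hβε, hεα, H, hH, hsmall⟩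
      · exact IH o (Order.lt_succ o) ((Order.lt_succ o).le.trans hξΛ) β η hmem G hG γ hβγ hγα
      rcases lt_trichotomy ε γ with hεγ | rfl | hγε
      · -- ε < γ : find a point of C_o at level ε and use IH
        have hbig : #{ζ' : K | G ∩ H ∈ F ε ζ'} = #K :=
          hF.2.2 β ε hβε hεα η (G ∩ H) (Filter.inter_mem hG hH)
        have hb : #{ζ' : K | G ∩ H ∈ F ε ζ' ∧ ¬ ((ε, ζ') ∈ closIter α F C o)} < #K := by
          refine lt_of_le_of_lt (Cardinal.mk_le_mk_of_subset ?_) hsmall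
          intro ζ' ⟨h1, h2⟩
          exact ⟨Filter.mem_of_superset h1 inter_subset_right, h2⟩
        have hgood : #{ζ' : K | G ∩ H ∈ F ε ζ' ∧ (ε, ζ') ∈ closIter α F C o} = #K :=
          mk_split' hK _ _ hbig hb
        have hne : {ζ' : K | G ∩ H ∈ F ε ζ' ∧ (ε, ζ') ∈ closIter α F C o}.Nonempty := by
          rw [← nonempty_coe_sort, ← Cardinal.mk_ne_zero_iff, hgood]
          exact fun h => (Cardinal.aleph0_pos.trans_le hK).ne' h
        obtain ⟨ζ', h1, h2⟩ := hne
        exact IH o (Order.lt_succ o) ((Order.lt_succ o).le.trans hξΛ) ε ζ' h2 G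
          (Filter.mem_of_superset h1 inter_subset_left) γ hεγ hγα
      · -- ε = γ
        have hbig : #{ζ : K | G ∩ H ∈ F ε ζ} = #K :=
          hF.2.2 β ε hβε hεα η (G ∩ H) (Filter.inter_mem hG hH)
        have hb : #{ζ : K | G ∩ H ∈ F ε ζ ∧ ¬ ((ε, ζ) ∈ closIter α F C o)} < #K := by
          refine lt_of_le_of_lt (Cardinal.mk_le_mk_of_subset ?_) hsmall
          intro ζ ⟨h1, h2⟩
          exact ⟨Filter.mem_of_superset h1 inter_subset_right, h2⟩
        have hgood : #{ζ : K | G ∩ H ∈ F ε ζ ∧ (ε, ζ) ∈ closIter α F C o} = #K :=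
          mk_split' hK _ _ hbig hb
        refine mk_eq_of_superset' ?_ hgood
        intro ζ ⟨h1, h2⟩
        exact ⟨closIter_mono' α F C _ o ((Order.lt_succ o).le.trans hξΛ) h2,
          Filter.mem_of_superset h1 inter_subset_left⟩
      · -- γ < ε
        have hbig : #{ζ : K | G ∩ H ∈ F γ ζ} = #K :=
          hF.2.2 β γ hβγ hγα η (G ∩ H) (Filter.inter_mem hG hH)
        refine mk_eq_of_superset' ?_ hbig
        intro ζ hζ
        refine ⟨closIter_mono' α F C _ (Order.succ o) hξΛ ?_,
          Filter.mem_of_superset hζ inter_subset_left⟩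
        rw [closIter_succ']
        exact Or.inr ⟨ε, hγε, hεα, H, Filter.mem_of_superset hζ inter_subset_right, hsmall⟩
    · -- limit
      rw [closIter_limit' α F C hlim] at hmem
      simp only [mem_iUnion] at hmem
      obtain ⟨ξ', hξ', hmem⟩ := hmem
      exact IH ξ' hξ' ((le_of_lt hξ').trans hξΛ) β η hmem G hG γ hβγ hγα

theorem mem_closure_many_successors_in_closure {K : Type u} (hK : aleph0 ≤ #K)
    (α : Ordinal.{u}) (F : Ordinal.{u} → K → Filter K) (hF : IsStratified α F)
    (X : Set K)
    (β : Ordinal.{u}) (η : K)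
    (hmem : (β, η) ∈ closIter α F
      {p : Ordinal.{u} × K | p.1 < α ∧ X ∈ F p.1 p.2} (Order.succ (#K)).ord)
    (G : Set K) (hG : G ∈ F β η)
    (γ : Ordinal.{u}) (hβγ : β < γ) (hγα : γ < α) :
    #{ζ : K | (γ, ζ) ∈ closIter α F
        {p : Ordinal.{u} × K | p.1 < α ∧ X ∈ F p.1 p.2} (Order.succ (#K)).ord ∧
      G ∈ F γ ζ} = #K :=
  main_aux hK α F hF X (Order.succ (#K)).ord le_rfl β η hmem G hG γ hβγ hγα
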